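/- Let S and Ŝ be symmetric positive definite matrices with Ŝ = W, and let γ ≥ 0. If ν is an eigenvalue of the generalized eigenvalue problem S y = ν Ŝ y, then λ = (1+γ)/(ν⁻¹+γ) is an eigenvalue of the generalized eigenvalue problem S_γ x = λ Ŝ_γ x, where S_γ := (S⁻¹ + γŜ⁻¹)⁻¹ and Ŝ_γ := ((1+γ)Ŝ⁻¹)⁻¹, and conversely every eigenvalue of the latter problem arises this way. -/

import Mathlib

open Matrix

/-- Remark 3.2: when `Ŝ = W`, the generalized eigenvalues of `Sγ x = λ Ŝγ x`
are exactly `λ = (1+γ)/(ν⁻¹+γ)` for `ν` a generalized eigenvalue of `S y = ν Ŝ y`. -/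
theorem stmt_6 {n : ℕ} (S Shat : Matrix (Fin n) (Fin n) ℝ)
    (hS : S.PosDef) (hShat : Shat.PosDef)
    (γ : ℝ) (hγ : 0 ≤ γ)
    (Sγ Shatγ : Matrix (Fin n) (Fin n) ℝ)
    (hSγ : Sγ = (S⁻¹ + γ • Shat⁻¹)⁻¹)
    (hShatγ : Shatγ = ((1 + γ) • Shat⁻¹)⁻¹) :
    (∀ ν : ℝ, (∃ y : Fin n → ℝ, y ≠ 0 ∧ S.mulVec y = ν • Shat.mulVec y) →
      ∃ x : Fin n → ℝ, x ≠ 0 ∧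
        Sγ.mulVec x = ((1 + γ) / (ν⁻¹ + γ)) • Shatγ.mulVec x) ∧
    (∀ lam : ℝ, (∃ x : Fin n → ℝ, x ≠ 0 ∧ Sγ.mulVec x = lam • Shatγ.mulVec x) →
      ∃ ν : ℝ, (∃ y : Fin n → ℝ, y ≠ 0 ∧ S.mulVec y = ν • Shat.mulVec y) ∧
        lam = (1 + γ) / (ν⁻¹ + γ)) := by
  have hc : (1 + γ) ≠ 0 := by positivity
  have hSdet : IsUnit S.det := isUnit_iff_ne_zero.mpr (ne_of_gt hS.det_pos)
  have hShatdet : IsUnit Shat.det := isUnit_iff_ne_zero.mpr (ne_of_gt hShat.det_pos)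
  -- A := S⁻¹ + γ • Shat⁻¹ is positive definite, hence invertible
  have hSemi : (γ • Shat⁻¹).PosSemidef := by
    refine Matrix.PosSemidef.of_dotProduct_mulVec_nonneg ?_ (fun x => ?_)
    · unfold Matrix.IsHermitian
      rw [conjTranspose_smul, hShat.inv.isHermitian.eq]
      simp
    · rw [smul_mulVec, dotProduct_smul]
      have := hShat.inv.posSemidef.dotProduct_mulVec_nonneg x
      simpa using mul_nonneg hγ (by simpa using this)
  have hA : (S⁻¹ + γ • Shat⁻¹).PosDef := hS.inv.add_posSemidef hSemi
  set A : Matrix (Fin n) (Fin n) ℝ := S⁻¹ + γ • Shat⁻¹ with hAdef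
  have hAdet : IsUnit A.det := isUnit_iff_ne_zero.mpr (ne_of_gt hA.det_pos)
  -- Shatγ = (1+γ)⁻¹ • Shat
  have hShatγ' : Shatγ = (1 + γ)⁻¹ • Shat := by
    rw [hShatγ]
    refine inv_eq_right_inv ?_
    rw [smul_mul_smul_comm, mul_inv_cancel₀ hc, nonsing_inv_mul Shat hShatdet, one_smul]
  constructor
  · -- forward direction
    rintro ν ⟨y, hy, hey⟩
    have hν : 0 < ν := by
      have h1 : 0 < y ⬝ᵥ S.mulVec y := by simpa using hS.dotProduct_mulVec_pos hy
      have h2 : 0 < y ⬝ᵥ Shat.mulVec y := by simpa using hShat.dotProduct_mulVec_pos hy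
      have : y ⬝ᵥ S.mulVec y = ν * (y ⬝ᵥ Shat.mulVec y) := by
        rw [hey, dotProduct_smul, smul_eq_mul]
      nlinarith
    have hνγ : 0 < ν⁻¹ + γ := by positivity
    refine ⟨y, hy, ?_⟩
    -- key : A.mulVec (Shat.mulVec y) = (ν⁻¹ + γ) • y
    have hSiy : S⁻¹.mulVec (Shat.mulVec y) = ν⁻¹ • y := by
      have : Shat.mulVec y = ν⁻¹ • S.mulVec y := by
        rw [hey, smul_smul, inv_mul_cancel₀ (ne_of_gt hν), one_smul]
      rw [this, mulVec_smul, mulVec_mulVec, nonsing_inv_mul S hSdet, one_mulVec]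
    have hkey : A.mulVec (Shat.mulVec y) = (ν⁻¹ + γ) • y := by
      rw [hAdef, add_mulVec, hSiy, smul_mulVec, mulVec_mulVec,
        nonsing_inv_mul Shat hShatdet, one_mulVec, add_smul]
    have hSγy : Sγ.mulVec y = (ν⁻¹ + γ)⁻¹ • Shat.mulVec y := by
      have h : A⁻¹.mulVec ((ν⁻¹ + γ)⁻¹ • (A.mulVec (Shat.mulVec y)))
          = A⁻¹.mulVec ((ν⁻¹ + γ)⁻¹ • ((ν⁻¹ + γ) • y)) := by rw [hkey]
      rw [smul_smul, inv_mul_cancel₀ (ne_of_gt hνγ), one_smul] at h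
      rw [mulVec_smul, mulVec_mulVec, nonsing_inv_mul A hAdet, one_mulVec] at h
      rw [hSγ, ← h]
    rw [hSγy, hShatγ', smul_mulVec, smul_smul]
    congr 1
    field_simp
  · -- converse direction
    rintro lam ⟨x, hx, hex⟩
    have hAx : A.mulVec (Sγ.mulVec x) = x := by
      rw [hSγ, mulVec_mulVec, mul_nonsing_inv A hAdet, one_mulVec]
    have hlam : lam ≠ 0 := by
      intro h
      apply hx
      rw [h, zero_smul] at hex
      rw [← hAx, hex, mulVec_zero]
    -- x = (lam/(1+γ)) • (S⁻¹ Shat x + γ • x)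
    have hmain : x = (lam * (1 + γ)⁻¹) • (S⁻¹.mulVec (Shat.mulVec x) + γ • x) := by
      conv_lhs => rw [← hAx, hex]
      rw [hShatγ', smul_mulVec, mulVec_smul, mulVec_smul, hAdef, add_mulVec,
        smul_mulVec]
      have hss : Shat⁻¹.mulVec (Shat.mulVec x) = x := by
        rw [mulVec_mulVec, nonsing_inv_mul Shat hShatdet, one_mulVec]
      rw [hss, smul_smul]
    set μ : ℝ := (1 + γ) / lam - γ with hμdef
    have hw : S⁻¹.mulVec (Shat.mulVec x) = μ • x := by
      have h := congrArg (fun v => ((1 + γ) / lam) • v) hmain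
      simp only [smul_smul] at h
      have : (1 + γ) / lam * (lam * (1 + γ)⁻¹) = 1 := by
        field_simp
      rw [this, one_smul] at h
      have h2 : ((1 + γ) / lam) • x - γ • x = S⁻¹.mulVec (Shat.mulVec x) := by
        rw [h]; module
      rw [← h2, hμdef, sub_smul]
    have hμ : μ ≠ 0 := by
      intro h
      apply hx
      rw [h, zero_smul] at hw
      have h1 : Shat.mulVec x = 0 := by
        have h : S.mulVec (S⁻¹.mulVec (Shat.mulVec x)) = S.mulVec 0 := by rw [hw]
        rwa [mulVec_mulVec, mul_nonsing_inv S hSdet, one_mulVec, mulVec_zero] at h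
      have h2 : Shat⁻¹.mulVec (Shat.mulVec x) = Shat⁻¹.mulVec 0 := by rw [h1]
      rwa [mulVec_mulVec, nonsing_inv_mul Shat hShatdet, one_mulVec, mulVec_zero] at h2
    refine ⟨μ⁻¹, ⟨x, hx, ?_⟩, ?_⟩
    · -- S x = μ⁻¹ • Shat x
      have h : S.mulVec (S⁻¹.mulVec (Shat.mulVec x)) = S.mulVec (μ • x) := by rw [hw]
      rw [mulVec_mulVec, mul_nonsing_inv S hSdet, one_mulVec, mulVec_smul] at h
      rw [h, smul_smul, inv_mul_cancel₀ hμ, one_smul]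
    · have hμγ : μ + γ = (1 + γ) / lam := by rw [hμdef]; ring
      rw [inv_inv, hμγ, eq_div_iff (div_ne_zero hc hlam)]
      field_simp
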